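/- For positive integers L ≤ M ≤ N and any continuous concave function f : ℝ^{M×N} → ℝ, the minimum of f over D is attained at some point of P; that is, there exists X* ∈ P with f(X*) ≤ f(X) for all X ∈ D. -/

import Mathlib

open Matrix BigOperators

/-- The set `P` of partial permutation matrices: real `M × N` matrices with entries in `{0,1}`,
row sums at most 1, column sums at most 1, and total sum equal to `L`. -/
def PPM (L M N : ℕ) : Set (Matrix (Fin M) (Fin N) ℝ) :=
  {X | (∀ i j, X i j = 0 ∨ X i j = 1) ∧ (∀ i, ∑ j, X i j ≤ 1) ∧
       (∀ j, ∑ i, X i j ≤ 1) ∧ (∑ i, ∑ j, X i j) = (L : ℝ)}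

/-- The set `D`: real `M × N` matrices with nonnegative entries, row sums at most 1,
column sums at most 1, and total sum equal to `L`. -/
def DSet (L M N : ℕ) : Set (Matrix (Fin M) (Fin N) ℝ) :=
  {X | (∀ i j, 0 ≤ X i j) ∧ (∀ i, ∑ j, X i j ≤ 1) ∧
       (∀ j, ∑ i, X i j ≤ 1) ∧ (∑ i, ∑ j, X i j) = (L : ℝ)}

/-- The `k × k` all-ones matrix `J_k`. -/
def Jmat (k : ℕ) : Matrix (Fin k) (Fin k) ℝ := Matrix.of fun _ _ => 1

/-- `PPM` is a finite set. -/
lemma ppm_finite (L M N : ℕ) : (PPM L M N).Finite := by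
  have hsub : PPM L M N ⊆ Set.range
      (fun b : Fin M → Fin N → Bool => (Matrix.of fun i j => if b i j then (1:ℝ) else 0)) := by
    intro X hX
    refine ⟨fun i j => decide (X i j = 1), ?_⟩
    ext i j
    rcases hX.1 i j with h | h <;> simp [h]
  exact (Set.finite_range _).subset hsub

/-- A witness element of `PPM`. -/
def ppmWitness (L M N : ℕ) : Matrix (Fin M) (Fin N) ℝ :=
  Matrix.of fun i j => if (j : ℕ) = (i : ℕ) ∧ (i : ℕ) < L then 1 else 0

/-- `PPM` is nonempty. -/
lemma ppm_nonempty (L M N : ℕ) (hLM : L ≤ M) (hMN : M ≤ N) :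
    (PPM L M N).Nonempty := by
  have hentry : ∀ (i : Fin M) (j : Fin N),
      ppmWitness L M N i j = if (j : ℕ) = (i : ℕ) ∧ (i : ℕ) < L then (1:ℝ) else 0 :=
    fun i j => rfl
  have hrow : ∀ i : Fin M, ∑ j : Fin N, ppmWitness L M N i j
      = if (i : ℕ) < L then (1:ℝ) else 0 := by
    intro i
    by_cases hi : (i : ℕ) < L
    · have hiN : (i : ℕ) < N := lt_of_lt_of_le i.isLt hMN
      have hiff : ∀ j : Fin N, ((j : ℕ) = (i : ℕ) ∧ (i : ℕ) < L) ↔ j = ⟨(i : ℕ), hiN⟩ := by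
        intro j
        constructor
        · rintro ⟨h1, _⟩; exact Fin.ext h1
        · rintro rfl; exact ⟨rfl, hi⟩
      rw [if_pos hi]
      calc ∑ j : Fin N, ppmWitness L M N i j
          = ∑ j : Fin N, if j = (⟨(i : ℕ), hiN⟩ : Fin N) then (1:ℝ) else 0 :=
            Finset.sum_congr rfl fun j _ => by
              rw [hentry]; exact if_congr (hiff j) rfl rfl
        _ = 1 := by simp
    · rw [if_neg hi]
      refine Finset.sum_eq_zero fun j _ => ?_
      rw [hentry]
      exact if_neg (fun h => hi h.2)
  refine ⟨ppmWitness L M N, ?_, ?_, ?_, ?_⟩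
  · intro i j
    rw [hentry]
    split_ifs
    · right; rfl
    · left; rfl
  · intro i
    rw [hrow]
    split_ifs <;> norm_num
  · intro j
    by_cases hj : (j : ℕ) < L
    · have hjM : (j : ℕ) < M := lt_of_lt_of_le hj hLM
      have hiff : ∀ i : Fin M, ((j : ℕ) = (i : ℕ) ∧ (i : ℕ) < L) ↔ i = ⟨(j : ℕ), hjM⟩ := by
        intro i
        constructor
        · rintro ⟨h1, _⟩; exact Fin.ext h1.symm
        · rintro rfl; exact ⟨rfl, hj⟩
      calc ∑ i : Fin M, ppmWitness L M N i j
          = ∑ i : Fin M, if i = (⟨(j : ℕ), hjM⟩ : Fin M) then (1:ℝ) else 0 :=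
            Finset.sum_congr rfl fun i _ => by
              rw [hentry]; exact if_congr (hiff i) rfl rfl
        _ ≤ 1 := by simp
    · have hz : ∑ i : Fin M, ppmWitness L M N i j = 0 := by
        refine Finset.sum_eq_zero fun i _ => ?_
        rw [hentry]
        refine if_neg ?_
        rintro ⟨h1, h2⟩
        exact hj (h1 ▸ h2)
      rw [hz]
      norm_num
  · rw [Finset.sum_congr rfl fun i _ => hrow i]
    rw [Fin.sum_univ_eq_sum_range (fun k => if k < L then (1:ℝ) else 0)]
    rw [← Finset.sum_filter]
    have hfil : (Finset.range M).filter (fun k => k < L) = Finset.range L := by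
      ext k; simp only [Finset.mem_filter, Finset.mem_range]
      constructor
      · rintro ⟨_, h⟩; exact h
      · intro h; exact ⟨lt_of_lt_of_le h hLM, h⟩
    rw [hfil]
    simp

open Finset in
/-- Key lemma: for any `X ∈ D`, a concave function is at least as small at some
partial permutation matrix. -/
lemma exists_ppm_le (L M N : ℕ) (hLM : L ≤ M) (hMN : M ≤ N)
    (f : Matrix (Fin M) (Fin N) ℝ → ℝ) (hf_conc : ConcaveOn ℝ Set.univ f)
    (X : Matrix (Fin M) (Fin N) ℝ) (hX : X ∈ DSet L M N) :
    ∃ Q ∈ PPM L M N, f Q ≤ f X := by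
  obtain ⟨hX0, hXr, hXc, hXs⟩ := hX
  have hLN : L ≤ N := hLM.trans hMN
  have hXs' : ∑ j, ∑ i, X i j = (L : ℝ) := by rw [Finset.sum_comm]; exact hXs
  have hcard : M + (N - L) = N + (M - L) := by omega
  let g : (Fin M ⊕ Fin (N - L)) ≃ (Fin N ⊕ Fin (M - L)) :=
    finSumFinEquiv.trans ((finCongr hcard).trans finSumFinEquiv.symm)
  -- the doubly stochastic completion
  let W : Matrix (Fin M ⊕ Fin (N - L)) (Fin N ⊕ Fin (M - L)) ℝ :=
    Matrix.fromBlocks X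
      (Matrix.of fun i (_ : Fin (M - L)) => (1 - ∑ j, X i j) / ((M - L : ℕ) : ℝ))
      (Matrix.of fun (_ : Fin (N - L)) j => (1 - ∑ i, X i j) / ((N - L : ℕ) : ℝ))
      0
  -- degenerate cases: if M = L all row sums are 1, if N = L all column sums are 1
  have hrow1 : (M - L : ℕ) = 0 → ∀ i, ∑ j, X i j = 1 := by
    intro h0 i
    by_contra hne
    have hlt : ∑ j, X i j < 1 := lt_of_le_of_ne (hXr i) hne
    have hstrict : ∑ i, ∑ j, X i j < ∑ _i : Fin M, (1 : ℝ) :=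
      Finset.sum_lt_sum (fun k _ => hXr k) ⟨i, Finset.mem_univ i, hlt⟩
    rw [hXs, Finset.sum_const, Finset.card_univ, Fintype.card_fin, nsmul_eq_mul, mul_one] at hstrict
    have : L < M := Nat.cast_lt.mp hstrict
    omega
  have hcol1 : (N - L : ℕ) = 0 → ∀ j, ∑ i, X i j = 1 := by
    intro h0 j
    by_contra hne
    have hlt : ∑ i, X i j < 1 := lt_of_le_of_ne (hXc j) hne
    have hstrict : ∑ j, ∑ i, X i j < ∑ _j : Fin N, (1 : ℝ) :=
      Finset.sum_lt_sum (fun k _ => hXc k) ⟨j, Finset.mem_univ j, hlt⟩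
    rw [hXs', Finset.sum_const, Finset.card_univ, Fintype.card_fin, nsmul_eq_mul, mul_one] at hstrict
    have : L < N := Nat.cast_lt.mp hstrict
    omega
  have hWnn : ∀ r c, 0 ≤ W r c := by
    rintro (i | a) (j | b)
    · exact hX0 i j
    · exact div_nonneg (sub_nonneg.mpr (hXr i)) (Nat.cast_nonneg _)
    · exact div_nonneg (sub_nonneg.mpr (hXc j)) (Nat.cast_nonneg _)
    · exact le_refl 0
  have hWrow : ∀ r, ∑ c, W r c = 1 := by
    rintro (i | a)
    · rw [Fintype.sum_sum_type]
      simp only [W, Matrix.fromBlocks_apply₁₁, Matrix.fromBlocks_apply₁₂, Matrix.of_apply]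
      rw [Finset.sum_const, Finset.card_univ, Fintype.card_fin, nsmul_eq_mul]
      rcases Nat.eq_zero_or_pos (M - L) with h0 | hpos
      · rw [h0, hrow1 h0 i]
        simp
      · have hne : ((M - L : ℕ) : ℝ) ≠ 0 := Nat.cast_ne_zero.mpr hpos.ne'
        rw [mul_div_cancel₀ _ hne]
        ring
    · have hpos : 0 < N - L := a.pos
      have hne : ((N - L : ℕ) : ℝ) ≠ 0 := Nat.cast_ne_zero.mpr hpos.ne'
      rw [Fintype.sum_sum_type]
      simp only [W, Matrix.fromBlocks_apply₂₁, Matrix.fromBlocks_apply₂₂, Matrix.of_apply,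
        Matrix.zero_apply]
      rw [Finset.sum_const, smul_zero, add_zero, ← Finset.sum_div, Finset.sum_sub_distrib,
        hXs', Finset.sum_const, Finset.card_univ, Fintype.card_fin, nsmul_eq_mul, mul_one]
      rw [show ((N : ℝ) - (L : ℝ)) = ((N - L : ℕ) : ℝ) by rw [Nat.cast_sub hLN]]
      exact div_self hne
  have hWcol : ∀ c, ∑ r, W r c = 1 := by
    rintro (j | b)
    · rw [Fintype.sum_sum_type]
      simp only [W, Matrix.fromBlocks_apply₁₁, Matrix.fromBlocks_apply₂₁, Matrix.of_apply]
      rw [Finset.sum_const, Finset.card_univ, Fintype.card_fin, nsmul_eq_mul]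
      rcases Nat.eq_zero_or_pos (N - L) with h0 | hpos
      · rw [h0, hcol1 h0 j]
        simp
      · have hne : ((N - L : ℕ) : ℝ) ≠ 0 := Nat.cast_ne_zero.mpr hpos.ne'
        rw [mul_div_cancel₀ _ hne]
        ring
    · have hpos : 0 < M - L := b.pos
      have hne : ((M - L : ℕ) : ℝ) ≠ 0 := Nat.cast_ne_zero.mpr hpos.ne'
      rw [Fintype.sum_sum_type]
      simp only [W, Matrix.fromBlocks_apply₁₂, Matrix.fromBlocks_apply₂₂, Matrix.of_apply,
        Matrix.zero_apply]
      rw [Finset.sum_const, smul_zero, add_zero, ← Finset.sum_div, Finset.sum_sub_distrib,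
        hXs, Finset.sum_const, Finset.card_univ, Fintype.card_fin, nsmul_eq_mul, mul_one]
      rw [show ((M : ℝ) - (L : ℝ)) = ((M - L : ℕ) : ℝ) by rw [Nat.cast_sub hLM]]
      exact div_self hne
  -- the square doubly stochastic matrix
  let Y : Matrix (Fin M ⊕ Fin (N - L)) (Fin M ⊕ Fin (N - L)) ℝ :=
    Matrix.of fun r s => W r (g s)
  have hY : Y ∈ doublyStochastic ℝ (Fin M ⊕ Fin (N - L)) := by
    rw [mem_doublyStochastic_iff_sum]
    refine ⟨fun r s => hWnn r (g s), fun r => ?_, fun s => ?_⟩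
    · calc ∑ s, W r (g s) = ∑ c, W r c := Equiv.sum_comp g (W r)
        _ = 1 := hWrow r
    · exact hWcol (g s)
  obtain ⟨w, hw0, hw1, hwY⟩ := exists_eq_sum_perm_of_mem_doublyStochastic hY
  have hperm : ∀ (τ : Equiv.Perm (Fin M ⊕ Fin (N - L))) (r s : Fin M ⊕ Fin (N - L)),
      τ.permMatrix ℝ r s = if s = τ r then 1 else 0 := by
    intro τ r s
    simp [Equiv.Perm.permMatrix, PEquiv.toMatrix_apply, Equiv.toPEquiv_apply, eq_comm]
  have hwYe : ∀ r s, Y r s = ∑ σ : Equiv.Perm (Fin M ⊕ Fin (N - L)),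
      w σ * σ.permMatrix ℝ r s := by
    intro r s
    rw [← hwY]
    simp [Matrix.sum_apply]
  have hz0 : ∀ (a : Fin (N - L)) (b : Fin (M - L)),
      Y (Sum.inr a) (g.symm (Sum.inr b)) = 0 := by
    intro a b
    show W (Sum.inr a) (g (g.symm (Sum.inr b))) = 0
    rw [Equiv.apply_symm_apply]
    rfl
  have hzσ : ∀ σ : Equiv.Perm (Fin M ⊕ Fin (N - L)), w σ ≠ 0 →
      ∀ (a : Fin (N - L)) (b : Fin (M - L)), Sum.inr b ≠ g (σ (Sum.inr a)) := by
    intro σ hσ a b hcontra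
    have h0 : ∑ τ : Equiv.Perm (Fin M ⊕ Fin (N - L)),
        w τ * τ.permMatrix ℝ (Sum.inr a) (g.symm (Sum.inr b)) = 0 := by
      rw [← hwYe]; exact hz0 a b
    have hterm := (Finset.sum_eq_zero_iff_of_nonneg (fun τ _ => by
        rw [hperm]
        split_ifs
        · simpa using hw0 τ
        · simp)).mp h0 σ (Finset.mem_univ σ)
    have hE : σ.permMatrix ℝ (Sum.inr a) (g.symm (Sum.inr b)) = 0 := by
      rcases mul_eq_zero.mp hterm with h | h
      · exact absurd h hσ
      · exact h
    rw [hperm] at hE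
    have hcond : g.symm (Sum.inr b) = σ (Sum.inr a) := by
      rw [hcontra, Equiv.symm_apply_apply]
    rw [if_pos hcond] at hE
    exact one_ne_zero hE
  -- the extracted partial permutation matrices
  let Q : Equiv.Perm (Fin M ⊕ Fin (N - L)) → Matrix (Fin M) (Fin N) ℝ :=
    fun σ => Matrix.of fun i j => σ.permMatrix ℝ (Sum.inl i) (g.symm (Sum.inl j))
  have hQapply : ∀ σ (i : Fin M) (j : Fin N),
      Q σ i j = if Sum.inl j = g (σ (Sum.inl i)) then 1 else 0 := by
    intro σ i j
    show σ.permMatrix ℝ (Sum.inl i) (g.symm (Sum.inl j)) = _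
    rw [hperm]
    exact if_congr (Equiv.symm_apply_eq g) rfl rfl
  have hXQ : X = ∑ σ : Equiv.Perm (Fin M ⊕ Fin (N - L)), w σ • Q σ := by
    ext i j
    have h1 : X i j = Y (Sum.inl i) (g.symm (Sum.inl j)) := by
      show X i j = W (Sum.inl i) (g (g.symm (Sum.inl j)))
      rw [Equiv.apply_symm_apply]
      rfl
    rw [h1, hwYe]
    simp [Matrix.sum_apply, Q]
  have hQrow : ∀ σ (i : Fin M), ∑ j, Q σ i j =
      if (g (σ (Sum.inl i))).isLeft then (1:ℝ) else 0 := by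
    intro σ i
    rcases hgi : g (σ (Sum.inl i)) with j0 | b
    · rw [if_pos (show (Sum.inl j0 : Fin N ⊕ Fin (M - L)).isLeft = true from rfl)]
      calc ∑ j, Q σ i j = ∑ j : Fin N, if j = j0 then (1:ℝ) else 0 := by
            refine Finset.sum_congr rfl fun j _ => ?_
            rw [hQapply, hgi]
            exact if_congr (by simp) rfl rfl
        _ = 1 := by simp
    · rw [if_neg (by simp : ¬ (Sum.inr b : Fin N ⊕ Fin (M - L)).isLeft = true)]
      refine Finset.sum_eq_zero fun j _ => ?_
      rw [hQapply, hgi]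
      exact if_neg (by simp)
  have hQmem : ∀ σ : Equiv.Perm (Fin M ⊕ Fin (N - L)), w σ ≠ 0 → Q σ ∈ PPM L M N := by
    intro σ hσ
    have hinr : ∀ a : Fin (N - L), (g (σ (Sum.inr a))).isLeft = true := by
      intro a
      rcases hga : g (σ (Sum.inr a)) with j0 | b
      · rfl
      · exact absurd hga.symm (hzσ σ hσ a b)
    refine ⟨?_, ?_, ?_, ?_⟩
    · intro i j
      rw [hQapply]
      split_ifs
      · right; rfl
      · left; rfl
    · intro i
      rw [hQrow]
      split_ifs <;> norm_num
    · intro j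
      have hiff : ∀ i : Fin M, (Sum.inl j = g (σ (Sum.inl i))) ↔
          (σ.symm (g.symm (Sum.inl j)) = Sum.inl i) := by
        intro i
        constructor
        · intro hh; rw [hh]; simp
        · intro hh; rw [← hh]; simp
      have hcalc : ∑ i, Q σ i j = ∑ i : Fin M,
          if σ.symm (g.symm (Sum.inl j)) = Sum.inl i then (1:ℝ) else 0 := by
        refine Finset.sum_congr rfl fun i _ => ?_
        rw [hQapply]
        exact if_congr (hiff i) rfl rfl
      rw [hcalc]
      rcases hc : σ.symm (g.symm (Sum.inl j)) with i0 | a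
      · calc ∑ i : Fin M, (if (Sum.inl i0 : Fin M ⊕ Fin (N - L)) = Sum.inl i then (1:ℝ) else 0)
            = ∑ i : Fin M, if i0 = i then (1:ℝ) else 0 := by
              refine Finset.sum_congr rfl fun i _ => if_congr (by simp) rfl rfl
          _ ≤ 1 := by simp
      · rw [Finset.sum_congr rfl fun i _ => if_neg (by simp)]
        simp
    · have hcount : ∑ r : Fin M ⊕ Fin (N - L),
          (if (g (σ r)).isLeft then (1:ℝ) else 0) = (N : ℝ) := by
        have hcomp := Equiv.sum_comp (σ.trans g)
          (fun c : Fin N ⊕ Fin (M - L) => if c.isLeft then (1:ℝ) else 0)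
        simp only [Equiv.trans_apply] at hcomp
        refine hcomp.trans ?_
        rw [Fintype.sum_sum_type]
        simp
      have hsplit : ∑ r : Fin M ⊕ Fin (N - L), (if (g (σ r)).isLeft then (1:ℝ) else 0)
          = (∑ i : Fin M, if (g (σ (Sum.inl i))).isLeft then (1:ℝ) else 0)
            + ((N - L : ℕ) : ℝ) := by
        rw [Fintype.sum_sum_type]
        congr 1
        rw [Finset.sum_congr rfl fun a _ => if_pos (hinr a)]
        simp
      have hmain : ∑ i : Fin M, (if (g (σ (Sum.inl i))).isLeft then (1:ℝ) else 0) = (L : ℝ) := by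
        rw [hsplit] at hcount
        have hc2 : ((N - L : ℕ) : ℝ) = (N : ℝ) - (L : ℝ) := by
          rw [Nat.cast_sub hLN]
        rw [hc2] at hcount
        linarith
      calc ∑ i, ∑ j, Q σ i j
          = ∑ i : Fin M, (if (g (σ (Sum.inl i))).isLeft then (1:ℝ) else 0) :=
            Finset.sum_congr rfl fun i _ => hQrow σ i
        _ = (L : ℝ) := hmain
  -- pick a positive-weight permutation minimizing f
  have hex : ∃ σ : Equiv.Perm (Fin M ⊕ Fin (N - L)), w σ ≠ 0 := by
    by_contra hnone
    push_neg at hnone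
    rw [Finset.sum_eq_zero (fun σ _ => hnone σ)] at hw1
    exact one_ne_zero hw1.symm
  obtain ⟨σ₁, hσ₁⟩ := hex
  set s : Finset (Equiv.Perm (Fin M ⊕ Fin (N - L))) :=
    Finset.univ.filter (fun σ => w σ ≠ 0) with hs
  obtain ⟨σ₀, hσ₀s, hσ₀min⟩ := Finset.exists_min_image s (fun σ => f (Q σ))
    ⟨σ₁, by simp [hs, hσ₁]⟩
  have hσ₀ : w σ₀ ≠ 0 := (Finset.mem_filter.mp hσ₀s).2
  refine ⟨Q σ₀, hQmem σ₀ hσ₀, ?_⟩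
  have hjensen : ∑ σ : Equiv.Perm (Fin M ⊕ Fin (N - L)), w σ • f (Q σ)
      ≤ f (∑ σ : Equiv.Perm (Fin M ⊕ Fin (N - L)), w σ • Q σ) :=
    hf_conc.le_map_sum (fun σ _ => hw0 σ) hw1 (fun σ _ => Set.mem_univ _)
  rw [← hXQ] at hjensen
  have hlow : f (Q σ₀) ≤ ∑ σ : Equiv.Perm (Fin M ⊕ Fin (N - L)), w σ • f (Q σ) := by
    calc f (Q σ₀) = ∑ σ : Equiv.Perm (Fin M ⊕ Fin (N - L)), w σ * f (Q σ₀) := by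
          rw [← Finset.sum_mul, hw1, one_mul]
      _ ≤ ∑ σ : Equiv.Perm (Fin M ⊕ Fin (N - L)), w σ * f (Q σ) := by
          refine Finset.sum_le_sum fun τ _ => ?_
          rcases eq_or_ne (w τ) 0 with h0 | hne
          · rw [h0]; simp
          · exact mul_le_mul_of_nonneg_left (hσ₀min τ (by simp [hs, hne])) (hw0 τ)
      _ = ∑ σ : Equiv.Perm (Fin M ⊕ Fin (N - L)), w σ • f (Q σ) := by
          simp [smul_eq_mul]
  exact hlow.trans hjensen

/-- Any continuous concave function attains its minimum over `D` at a point of `P`. -/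
theorem concave_min_attained_on_PPM (L M N : ℕ)
    (hL : 0 < L) (hLM : L ≤ M) (hMN : M ≤ N)
    (f : Matrix (Fin M) (Fin N) ℝ → ℝ)
    (hf_cont : Continuous f) (hf_conc : ConcaveOn ℝ Set.univ f) :
    ∃ Xstar ∈ PPM L M N, ∀ X ∈ DSet L M N, f Xstar ≤ f X := by
  have hfin := ppm_finite L M N
  have hne := ppm_nonempty L M N hLM hMN
  have hne' : hfin.toFinset.Nonempty := by
    rwa [← Set.Finite.toFinset_nonempty hfin] at hne
  obtain ⟨Xstar, hXstar, hmin⟩ := Finset.exists_min_image hfin.toFinset f hne'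
  refine ⟨Xstar, (Set.Finite.mem_toFinset hfin).mp hXstar, ?_⟩
  intro X hX
  obtain ⟨Q, hQ, hfQ⟩ := exists_ppm_le L M N hLM hMN f hf_conc X hX
  exact le_trans (hmin Q ((Set.Finite.mem_toFinset hfin).mpr hQ)) hfQ
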